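/- arXiv:1501.03904 — 2 statements merged into one kernel-verified Lean document; each statement's English description precedes it below -/
import Mathlib

section
/- Define f : M(2×2, ℂ) → M(3×3, ℂ) by sending Z with entries z₁ = Z₁₁, z₂ = Z₁₂, z₃ = Z₂₁, z₄ = Z₂₂ to the matrix with rows (z₁², z₁z₂, z₂), (z₁z₃, z₂z₃, z₄), (z₃, z₄, 0). Then f maps Ω_{2,2} into Ω_{3,3}, and the restriction f : Ω_{2,2} → Ω_{3,3} is a proper map, i.e., the preimage under f of every compact subset of Ω_{3,3} is compact. -/
open Matrix
open scoped ComplexOrder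

/-- The type I bounded symmetric domain `Ω_{r,s}`. -/
def OmegaI (r s : ℕ) : Set (Matrix (Fin r) (Fin s) ℂ) :=
  {Z | (1 - Z * Zᴴ).PosDef}

/-- The map `f` of Statement 12. -/
def whitneyMap (Z : Matrix (Fin 2) (Fin 2) ℂ) : Matrix (Fin 3) (Fin 3) ℂ :=
  !![Z 0 0 ^ 2,       Z 0 0 * Z 0 1,  Z 0 1;
     Z 0 0 * Z 1 0,   Z 0 1 * Z 1 0,  Z 1 1;
     Z 1 0,           Z 1 1,          0]

/-- `1 - M Mᴴ` is always Hermitian. -/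
lemma aux_herm {n : ℕ} (M : Matrix (Fin n) (Fin n) ℂ) : (1 - M * Mᴴ).IsHermitian := by
  simp [Matrix.IsHermitian, conjTranspose_sub, conjTranspose_mul]

set_option maxHeartbeats 2000000 in
/-- The fundamental quadratic-form identity for the Whitney map. -/
lemma key_identity (Z : Matrix (Fin 2) (Fin 2) ℂ) (v : Fin 3 → ℂ) :
    star v ⬝ᵥ ((1 - whitneyMap Z * (whitneyMap Z)ᴴ) *ᵥ v)
    = star ![star (Z 0 0) * v 0 + star (Z 1 0) * v 1, v 2] ⬝ᵥ
        ((1 - Z * Zᴴ) *ᵥ ![star (Z 0 0) * v 0 + star (Z 1 0) * v 1, v 2])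
      + star ![v 0, v 1] ⬝ᵥ ((1 - Z * Zᴴ) *ᵥ ![v 0, v 1]) := by
  simp [whitneyMap, dotProduct, mulVec, Matrix.mul_apply, Matrix.one_apply,
    Fin.sum_univ_three, Fin.sum_univ_two, star_mul', star_pow, star_add, Matrix.vecMul,
    Matrix.conjTranspose_apply]
  ring

/-- Forward direction: the Whitney map sends `Ω_{2,2}` into `Ω_{3,3}`. -/
lemma aux_forward (Z : Matrix (Fin 2) (Fin 2) ℂ) (hZ : (1 - Z * Zᴴ).PosDef) :
    (1 - whitneyMap Z * (whitneyMap Z)ᴴ).PosDef := by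
  refine PosDef.of_dotProduct_mulVec_pos (aux_herm _) (fun v hv => ?_)
  rw [key_identity]
  by_cases hb : (![v 0, v 1] : Fin 2 → ℂ) = 0
  · have h0 : v 0 = 0 := congrFun hb 0
    have h1 : v 1 = 0 := congrFun hb 1
    have h2 : v 2 ≠ 0 := by
      intro h2
      apply hv
      funext i
      fin_cases i <;> assumption
    have ha : (![star (Z 0 0) * v 0 + star (Z 1 0) * v 1, v 2] : Fin 2 → ℂ) ≠ 0 := by
      intro h
      exact h2 (congrFun h 1)
    exact add_pos_of_pos_of_nonneg (hZ.dotProduct_mulVec_pos ha) (hZ.posSemidef.dotProduct_mulVec_nonneg _)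
  · exact add_pos_of_nonneg_of_pos (hZ.posSemidef.dotProduct_mulVec_nonneg _) (hZ.dotProduct_mulVec_pos hb)

/-- If `W` is psd and `W *ᵥ x = 0`, any quadratic form of `W` at a multiple of `x` vanishes. -/
lemma aux_form_zero (W : Matrix (Fin 2) (Fin 2) ℂ) (x : Fin 2 → ℂ) (hx : W *ᵥ x = 0)
    (c : ℂ) (u : Fin 2 → ℂ) (hu : u = c • x) : star u ⬝ᵥ (W *ᵥ u) = 0 := by
  subst hu
  rw [mulVec_smul, hx, smul_zero, dotProduct_zero]

/-- Backward direction: positive semidefiniteness plus positivity after the Whitney map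
gives positive definiteness. -/
lemma aux_backward (Z : Matrix (Fin 2) (Fin 2) ℂ)
    (hpsd : (1 - Z * Zᴴ).PosSemidef)
    (hf : (1 - whitneyMap Z * (whitneyMap Z)ᴴ).PosDef) :
    (1 - Z * Zᴴ).PosDef := by
  refine PosDef.of_dotProduct_mulVec_pos hpsd.1 (fun x hx => ?_)
  by_contra hlt
  -- the form vanishes at x
  have hzero : star x ⬝ᵥ ((1 - Z * Zᴴ) *ᵥ x) = 0 := by
    by_contra hne
    exact hlt (lt_of_le_of_ne (hpsd.dotProduct_mulVec_nonneg x) (Ne.symm hne))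
  -- hence x is in the kernel
  have hker : (1 - Z * Zᴴ) *ᵥ x = 0 := (hpsd.dotProduct_mulVec_zero_iff x).mp hzero
  by_cases h0 : x 0 = 0
  · -- use the vector (0,0,1)
    have h1 : x 1 ≠ 0 := by
      intro h1
      apply hx
      funext i
      fin_cases i <;> assumption
    have hv : (![0, 0, 1] : Fin 3 → ℂ) ≠ 0 := by
      intro h
      simpa using congrFun h 2
    have := hf.dotProduct_mulVec_pos hv
    rw [key_identity] at this
    rw [aux_form_zero _ x hker ((x 1)⁻¹) _ (by
        funext i
        fin_cases i <;> simp [h0, inv_mul_cancel₀ h1]),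
      aux_form_zero _ x hker 0 _ (by funext i; fin_cases i <;> simp)] at this
    simp at this
  · -- use the vector (x₀, x₁, μ x₁) with μ = (conj z₁ · x₀ + conj z₃ · x₁)/x₀
    set μ : ℂ := (star (Z 0 0) * x 0 + star (Z 1 0) * x 1) / x 0 with hμ
    have hv : (![x 0, x 1, μ * x 1] : Fin 3 → ℂ) ≠ 0 := by
      intro h
      exact h0 (congrFun h 0)
    have := hf.dotProduct_mulVec_pos hv
    rw [key_identity] at this
    rw [aux_form_zero _ x hker μ _ (by
        funext i
        fin_cases i <;> simp [hμ, div_mul_cancel₀ _ h0]),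
      aux_form_zero _ x hker 1 _ (by funext i; fin_cases i <;> simp)] at this
    simp at this

/-- Entries of matrices in `Ω_{2,2}` lie in the closed unit disc. -/
lemma aux_bound (Z : Matrix (Fin 2) (Fin 2) ℂ) (hZ : (1 - Z * Zᴴ).PosDef)
    (i j : Fin 2) : Z i j ∈ Metric.closedBall (0 : ℂ) 1 := by
  have key : ∀ k : Fin 2, Complex.normSq (Z k 0) + Complex.normSq (Z k 1) < 1 := by
    intro k
    have hk : (Pi.single k 1 : Fin 2 → ℂ) ≠ 0 := by
      intro h
      simpa using congrFun h k
    have := hZ.dotProduct_mulVec_pos hk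
    have hval : star (Pi.single k 1 : Fin 2 → ℂ) ⬝ᵥ ((1 - Z * Zᴴ) *ᵥ Pi.single k 1)
        = 1 - (Z k 0 * star (Z k 0) + Z k 1 * star (Z k 1)) := by
      fin_cases k <;>
        simp [dotProduct, mulVec, Matrix.mul_apply, Matrix.one_apply, Fin.sum_univ_two,
          Pi.single_apply, conjTranspose_apply]
    rw [hval] at this
    rw [Complex.lt_def] at this
    have h1 := this.1
    simp only [Complex.sub_re, Complex.one_re, Complex.add_re, Complex.zero_re] at h1
    have e0 : (Z k 0 * star (Z k 0)).re = Complex.normSq (Z k 0) := by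
      rw [show (star (Z k 0)) = (starRingEnd ℂ) (Z k 0) from rfl, Complex.mul_conj]
      simp
    have e1 : (Z k 1 * star (Z k 1)).re = Complex.normSq (Z k 1) := by
      rw [show (star (Z k 1)) = (starRingEnd ℂ) (Z k 1) from rfl, Complex.mul_conj]
      simp
    rw [e0, e1] at h1
    linarith
  have hij : Complex.normSq (Z i j) < 1 := by
    have := key i
    have h0 := Complex.normSq_nonneg (Z i 0)
    have h1 := Complex.normSq_nonneg (Z i 1)
    have hj : Z i j = Z i 0 ∨ Z i j = Z i 1 := by
      fin_cases j
      exacts [Or.inl rfl, Or.inr rfl]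
    rcases hj with h | h <;> rw [h] <;> linarith
  rw [mem_closedBall_zero_iff]
  have : ‖Z i j‖ ^ 2 < 1 := by
    rw [← Complex.sq_norm] at hij
    exact hij
  nlinarith [norm_nonneg (Z i j)]

/-- The quadratic form of `1 - Z Zᴴ` depends continuously on `Z`. -/
lemma aux_cont (x : Fin 2 → ℂ) :
    Continuous fun Z : Matrix (Fin 2) (Fin 2) ℂ => star x ⬝ᵥ ((1 - Z * Zᴴ) *ᵥ x) := by
  apply Continuous.dotProduct continuous_const
  apply Continuous.matrix_mulVec _ continuous_const
  exact continuous_const.sub (continuous_id.matrix_mul continuous_id.matrix_conjTranspose)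

/-- The Whitney map is continuous. -/
lemma aux_cont_whitney : Continuous whitneyMap := by
  apply continuous_matrix
  intro i j
  fin_cases i <;> fin_cases j <;>
    · simp [whitneyMap]
      fun_prop

/-- The map sending `Z = (z₁ z₂; z₃ z₄)` to the matrix with rows
`(z₁², z₁z₂, z₂)`, `(z₁z₃, z₂z₃, z₄)`, `(z₃, z₄, 0)` maps `Ω_{2,2}` into `Ω_{3,3}` and is
proper: preimages of compact subsets of `Ω_{3,3}` are compact. -/
theorem statement12 :
    (∀ Z ∈ OmegaI 2 2, whitneyMap Z ∈ OmegaI 3 3) ∧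
    ∀ K : Set (Matrix (Fin 3) (Fin 3) ℂ), K ⊆ OmegaI 3 3 → IsCompact K →
      IsCompact {Z | Z ∈ OmegaI 2 2 ∧ whitneyMap Z ∈ K} := by
  constructor
  · exact fun Z hZ => aux_forward Z hZ
  · intro K hK hKc
    -- the closed "semidefinite" superset
    set T : Set (Matrix (Fin 2) (Fin 2) ℂ) :=
      {Z | ∀ x : Fin 2 → ℂ,
        0 ≤ (star x ⬝ᵥ ((1 - Z * Zᴴ) *ᵥ x)).re ∧ (star x ⬝ᵥ ((1 - Z * Zᴴ) *ᵥ x)).im = 0}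
      with hT
    have hTclosed : IsClosed T := by
      rw [hT]
      have : {Z : Matrix (Fin 2) (Fin 2) ℂ | ∀ x : Fin 2 → ℂ,
          0 ≤ (star x ⬝ᵥ ((1 - Z * Zᴴ) *ᵥ x)).re ∧ (star x ⬝ᵥ ((1 - Z * Zᴴ) *ᵥ x)).im = 0}
          = ⋂ x : Fin 2 → ℂ, ({Z | 0 ≤ (star x ⬝ᵥ ((1 - Z * Zᴴ) *ᵥ x)).re} ∩
            {Z | (star x ⬝ᵥ ((1 - Z * Zᴴ) *ᵥ x)).im = 0}) := by
        ext Z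
        simp [Set.mem_iInter, forall_and]
      rw [this]
      exact isClosed_iInter fun x => IsClosed.inter
        (isClosed_le continuous_const (Complex.continuous_re.comp (aux_cont x)))
        (isClosed_eq (Complex.continuous_im.comp (aux_cont x)) continuous_const)
    -- membership in T means positive semidefiniteness
    have hTpsd : ∀ Z, Z ∈ T ↔ (1 - Z * Zᴴ).PosSemidef := by
      intro Z
      constructor
      · intro h
        refine PosSemidef.of_dotProduct_mulVec_nonneg (aux_herm _) (fun x => ?_)
        rw [Complex.le_def]
        exact ⟨by simpa using (h x).1, by simpa using ((h x).2).symm⟩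
      · intro h x
        have := h.dotProduct_mulVec_nonneg x
        rw [Complex.le_def] at this
        exact ⟨by simpa using this.1, by simpa using this.2.symm⟩
    -- identification of the set
    have hset : {Z | Z ∈ OmegaI 2 2 ∧ whitneyMap Z ∈ K} = T ∩ whitneyMap ⁻¹' K := by
      ext Z
      constructor
      · rintro ⟨hZ, hZK⟩
        exact ⟨(hTpsd Z).mpr hZ.posSemidef, hZK⟩
      · rintro ⟨hZT, hZK⟩
        exact ⟨aux_backward Z ((hTpsd Z).mp hZT) (hK hZK), hZK⟩
    rw [hset]
    -- closedness
    have hclosed : IsClosed (T ∩ whitneyMap ⁻¹' K) :=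
      hTclosed.inter (hKc.isClosed.preimage aux_cont_whitney)
    -- boundedness : contained in a compact box
    have hbox : IsCompact (Set.univ.pi fun _ : Fin 2 =>
        Set.univ.pi fun _ : Fin 2 => Metric.closedBall (0 : ℂ) 1) :=
      isCompact_univ_pi fun _ => isCompact_univ_pi fun _ => isCompact_closedBall _ _
    refine IsCompact.of_isClosed_subset hbox hclosed ?_
    rintro Z ⟨hZT, hZK⟩
    have hpd := aux_backward Z ((hTpsd Z).mp hZT) (hK hZK)
    exact Set.mem_univ_pi.mpr fun i => Set.mem_univ_pi.mpr fun j => aux_bound Z hpd i j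
end

section
/- Let r ≥ 1 and let h : Ω_{r,r} → ℂ be holomorphic (i.e., h is complex differentiable on the open set Ω_{r,r} ⊂ M(r×r, ℂ)) with |h(Z)| < 1 for all Z ∈ Ω_{r,r}. Define f(Z) to be the (r+1)×(r+1) block-diagonal matrix with upper-left block Z and lower-right entry h(Z). Then f maps Ω_{r,r} into Ω_{r+1,r+1}, and f : Ω_{r,r} → Ω_{r+1,r+1} is a proper map, i.e., the preimage under f of every compact subset of Ω_{r+1,r+1} is compact. -/
open Matrix
open scoped ComplexOrder

attribute [local instance] Matrix.normedAddCommGroup Matrix.normedSpace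

/-- The block diagonal map of Statement 14: `Z ↦ diag(Z, h(Z))`. -/
noncomputable def blockDiagMap (r : ℕ) (h : Matrix (Fin r) (Fin r) ℂ → ℂ)
    (Z : Matrix (Fin r) (Fin r) ℂ) : Matrix (Fin (r + 1)) (Fin (r + 1)) ℂ :=
  (fromBlocks Z 0 0 (h Z • (1 : Matrix (Fin 1) (Fin 1) ℂ))).submatrix
    finSumFinEquiv.symm finSumFinEquiv.symm

section Aux

set_option linter.unusedSectionVars false

variable {m n : Type*} [Fintype m] [Fintype n] [DecidableEq m] [DecidableEq n]

lemma posDef_fromBlocks_iff' {A : Matrix m m ℂ} {D : Matrix n n ℂ} :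
    (fromBlocks A 0 0 D).PosDef ↔ A.PosDef ∧ D.PosDef := by
  simp only [posDef_iff_dotProduct_mulVec]
  constructor
  · rintro ⟨hherm, hpos⟩
    have hA : A.IsHermitian := by
      have := congrArg Matrix.toBlocks₁₁ hherm
      simpa [fromBlocks_conjTranspose, IsHermitian] using this
    have hD : D.IsHermitian := by
      have := congrArg Matrix.toBlocks₂₂ hherm
      simpa [fromBlocks_conjTranspose, IsHermitian] using this
    refine ⟨⟨hA, fun x hx => ?_⟩, ⟨hD, fun y hy => ?_⟩⟩
    · have := hpos (x := Sum.elim x 0) (by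
        simp only [ne_eq, funext_iff, not_forall] at hx ⊢
        obtain ⟨i, hi⟩ := hx
        exact ⟨Sum.inl i, by simpa using hi⟩)
      simpa [fromBlocks_mulVec, Function.star_sumElim, sumElim_dotProduct_sumElim] using this
    · have := hpos (x := Sum.elim 0 y) (by
        simp only [ne_eq, funext_iff, not_forall] at hy ⊢
        obtain ⟨i, hi⟩ := hy
        exact ⟨Sum.inr i, by simpa using hi⟩)
      simpa [fromBlocks_mulVec, Function.star_sumElim, sumElim_dotProduct_sumElim] using this
  · rintro ⟨hA, hD⟩
    refine ⟨?_, fun x hx => ?_⟩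
    · show _ᴴ = _
      rw [fromBlocks_conjTranspose, hA.1.eq, hD.1.eq]
      simp
    · have hx' : x = Sum.elim (x ∘ Sum.inl) (x ∘ Sum.inr) := by
        ext i; cases i <;> rfl
      rw [hx']
      rw [fromBlocks_mulVec, Function.star_sumElim, sumElim_dotProduct_sumElim]
      simp only [Matrix.zero_mulVec, add_zero, zero_add]
      rcases eq_or_ne (x ∘ Sum.inl) 0 with h1 | h1
      · have h2 : x ∘ Sum.inr ≠ 0 := by
          intro h2
          apply hx
          rw [hx', h1, h2]; simp
        have := hD.2 h2
        simp [h1, this]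
      · rcases eq_or_ne (x ∘ Sum.inr) 0 with h2 | h2
        · have := hA.2 h1
          simp [h2, this]
        · exact add_pos (hA.2 h1) (hD.2 h2)

lemma dotProduct_comp_equiv' (e : m ≃ n) (u v : n → ℂ) :
    (u ∘ ⇑e) ⬝ᵥ (v ∘ ⇑e) = u ⬝ᵥ v :=
  Fintype.sum_equiv e _ _ (fun _ => rfl)

lemma posDef_submatrix_equiv' {M : Matrix n n ℂ} (e : m ≃ n) :
    (M.submatrix ⇑e ⇑e).PosDef ↔ M.PosDef := by
  simp only [posDef_iff_dotProduct_mulVec]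
  constructor
  · rintro ⟨hherm, hpos⟩
    refine ⟨?_, fun x hx => ?_⟩
    · have := congrArg (fun N => N.submatrix ⇑e.symm ⇑e.symm) hherm
      simpa [conjTranspose_submatrix, submatrix_submatrix, IsHermitian] using this
    · have := hpos (x := x ∘ e) (by
        simp only [ne_eq, funext_iff, not_forall] at hx ⊢
        obtain ⟨i, hi⟩ := hx
        exact ⟨e.symm i, by simpa using hi⟩)
      have hxe : (x ∘ ⇑e) ∘ ⇑e.symm = x := by ext i; simp
      rw [submatrix_mulVec_equiv, hxe] at this
      have hs : star (x ∘ ⇑e) = star x ∘ ⇑e := rfl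
      rw [hs, dotProduct_comp_equiv'] at this
      exact this
  · rintro ⟨hherm, hpos⟩
    refine ⟨by simp [IsHermitian, conjTranspose_submatrix, hherm.eq], fun x hx => ?_⟩
    have := hpos (x := x ∘ e.symm) (by
      simp only [ne_eq, funext_iff, not_forall] at hx ⊢
      obtain ⟨i, hi⟩ := hx
      exact ⟨e i, by simpa using hi⟩)
    rw [submatrix_mulVec_equiv]
    have hxe : star x = star (x ∘ ⇑e.symm) ∘ ⇑e := by ext i; simp
    rw [hxe, dotProduct_comp_equiv']
    exact this

end Aux

lemma mem_omega_bdm_iff (r : ℕ) (c : ℂ) (Z : Matrix (Fin r) (Fin r) ℂ) :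
    (fromBlocks Z 0 0 (c • (1 : Matrix (Fin 1) (Fin 1) ℂ))).submatrix
      ⇑finSumFinEquiv.symm ⇑finSumFinEquiv.symm ∈ OmegaI (r+1) (r+1) ↔
    Z ∈ OmegaI r r ∧ ‖c‖ < 1 := by
  set M := fromBlocks Z 0 0 (c • (1 : Matrix (Fin 1) (Fin 1) ℂ)) with hM
  have key : (1 : Matrix (Fin (r+1)) (Fin (r+1)) ℂ) -
      M.submatrix ⇑finSumFinEquiv.symm ⇑finSumFinEquiv.symm *
      (M.submatrix ⇑finSumFinEquiv.symm ⇑finSumFinEquiv.symm)ᴴ =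
      ((1 : Matrix (Fin r ⊕ Fin 1) (Fin r ⊕ Fin 1) ℂ) - M * Mᴴ).submatrix
        ⇑finSumFinEquiv.symm ⇑finSumFinEquiv.symm := by
    rw [conjTranspose_submatrix, submatrix_mul_equiv,
      show (1 : Matrix (Fin (r+1)) (Fin (r+1)) ℂ) =
        (1 : Matrix (Fin r ⊕ Fin 1) (Fin r ⊕ Fin 1) ℂ).submatrix
          ⇑finSumFinEquiv.symm ⇑finSumFinEquiv.symm from
        (submatrix_one_equiv finSumFinEquiv.symm).symm]
    ext i j
    simp [Matrix.sub_apply, Matrix.one_apply, EmbeddingLike.apply_eq_iff_eq]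
  simp only [OmegaI, Set.mem_setOf_eq]
  rw [key, posDef_submatrix_equiv']
  have expand : (1 : Matrix (Fin r ⊕ Fin 1) (Fin r ⊕ Fin 1) ℂ) - M * Mᴴ =
      fromBlocks (1 - Z * Zᴴ) 0 0 (((1 - c * star c : ℂ)) • 1) := by
    rw [hM, fromBlocks_conjTranspose, fromBlocks_multiply, ← fromBlocks_one, sub_eq_add_neg,
      fromBlocks_neg, fromBlocks_add]
    simp [sub_eq_add_neg, add_smul, neg_smul, one_smul, smul_smul, mul_comm]
  rw [expand, posDef_fromBlocks_iff']
  have h1 : ((1 - c * star c : ℂ) • (1 : Matrix (Fin 1) (Fin 1) ℂ)).PosDef ↔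
      ‖c‖ < 1 := by
    rw [smul_one_eq_diagonal, posDef_diagonal_iff]
    have : c * star c = ((Complex.normSq c : ℝ) : ℂ) := by
      simp [Complex.mul_conj]
    rw [this]
    constructor
    · intro hp
      have := hp 0
      rw [show (1 : ℂ) - ((Complex.normSq c : ℝ) : ℂ) = ((1 - Complex.normSq c : ℝ) : ℂ) by
        push_cast; ring, Complex.zero_lt_real] at this
      have h2 : Complex.normSq c < 1 := by linarith
      rw [Complex.normSq_eq_norm_sq] at h2
      exact (sq_lt_one_iff₀ (norm_nonneg c)).mp h2
    · intro hc i
      rw [show (1 : ℂ) - ((Complex.normSq c : ℝ) : ℂ) = ((1 - Complex.normSq c : ℝ) : ℂ) by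
        push_cast; ring, Complex.zero_lt_real]
      have : Complex.normSq c < 1 := by
        rw [Complex.normSq_eq_norm_sq]
        exact (sq_lt_one_iff₀ (norm_nonneg c)).mpr hc
      linarith
  rw [h1]

lemma continuous_bdm (r : ℕ) : Continuous (fun p : ℂ × Matrix (Fin r) (Fin r) ℂ =>
    (fromBlocks p.2 0 0 (p.1 • (1 : Matrix (Fin 1) (Fin 1) ℂ))).submatrix
      ⇑finSumFinEquiv.symm ⇑finSumFinEquiv.symm) := by
  apply continuous_pi; intro i; apply continuous_pi; intro j
  simp only [submatrix_apply]
  generalize finSumFinEquiv.symm i = a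
  generalize finSumFinEquiv.symm j = b
  rcases a with a | a <;> rcases b with b | b
  · simpa [fromBlocks, Function.comp_def] using
      ((continuous_apply b).comp ((continuous_apply a).comp continuous_snd))
  · simpa [fromBlocks] using (continuous_const : Continuous fun _ :
      ℂ × Matrix (Fin r) (Fin r) ℂ => (0 : ℂ))
  · simpa [fromBlocks] using (continuous_const : Continuous fun _ :
      ℂ × Matrix (Fin r) (Fin r) ℂ => (0 : ℂ))
  · obtain rfl : a = b := Subsingleton.elim a b
    simpa [fromBlocks, Matrix.smul_apply, Matrix.one_apply] using continuous_fst

lemma continuous_proj (r : ℕ) : Continuous (fun W : Matrix (Fin (r+1)) (Fin (r+1)) ℂ =>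
    W.submatrix (fun i : Fin r => finSumFinEquiv (Sum.inl i))
      (fun j : Fin r => finSumFinEquiv (Sum.inl j))) := by
  apply continuous_pi; intro i; apply continuous_pi; intro j
  simp only [submatrix_apply]
  exact (continuous_apply _).comp (continuous_apply _)

/-- If `h : Ω_{r,r} → ℂ` is holomorphic with `|h(Z)| < 1` on `Ω_{r,r}`,
then `Z ↦ diag(Z, h(Z))` maps `Ω_{r,r}` into `Ω_{r+1,r+1}` and is proper: preimages of
compact subsets of `Ω_{r+1,r+1}` are compact. -/
theorem statement14 (r : ℕ) (hr : 1 ≤ r)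
    (h : Matrix (Fin r) (Fin r) ℂ → ℂ)
    (hhol : DifferentiableOn ℂ h (OmegaI r r))
    (hbdd : ∀ Z ∈ OmegaI r r, ‖h Z‖ < 1) :
    (∀ Z ∈ OmegaI r r, blockDiagMap r h Z ∈ OmegaI (r + 1) (r + 1)) ∧
    ∀ K : Set (Matrix (Fin (r + 1)) (Fin (r + 1)) ℂ), K ⊆ OmegaI (r + 1) (r + 1) →
      IsCompact K → IsCompact {Z | Z ∈ OmegaI r r ∧ blockDiagMap r h Z ∈ K} := by
  have hbd : ∀ Z, blockDiagMap r h Z =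
      (fromBlocks Z 0 0 (h Z • (1 : Matrix (Fin 1) (Fin 1) ℂ))).submatrix
        ⇑finSumFinEquiv.symm ⇑finSumFinEquiv.symm := fun _ => rfl
  have hmem : ∀ Z ∈ OmegaI r r, blockDiagMap r h Z ∈ OmegaI (r + 1) (r + 1) := by
    intro Z hZ
    rw [hbd]
    exact (mem_omega_bdm_iff r (h Z) Z).mpr ⟨hZ, hbdd Z hZ⟩
  refine ⟨hmem, fun K hKsub hK => ?_⟩
  set π : Matrix (Fin (r+1)) (Fin (r+1)) ℂ → Matrix (Fin r) (Fin r) ℂ :=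
    fun W => W.submatrix (fun i : Fin r => finSumFinEquiv (Sum.inl i))
      (fun j : Fin r => finSumFinEquiv (Sum.inl j)) with hπdef
  have hπf : ∀ Z, π (blockDiagMap r h Z) = Z := by
    intro Z
    ext i j
    simp [hπdef, blockDiagMap, submatrix_apply, Equiv.symm_apply_apply, fromBlocks]
  have hsub : {Z | Z ∈ OmegaI r r ∧ blockDiagMap r h Z ∈ K} ⊆ π '' K :=
    fun Z hZ => ⟨blockDiagMap r h Z, hZ.2, hπf Z⟩
  have hclosed : IsClosed {Z | Z ∈ OmegaI r r ∧ blockDiagMap r h Z ∈ K} := by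
    haveI : SequentialSpace (Matrix (Fin r) (Fin r) ℂ) :=
      inferInstanceAs (SequentialSpace (Fin r → Fin r → ℂ))
    apply IsSeqClosed.isClosed
    intro Z L hZS hlim
    obtain ⟨c₀, hc₀mem, φ, hφ, hcconv⟩ := (isCompact_closedBall (0:ℂ) 1).tendsto_subseq
      (x := fun n => h (Z n)) (fun n => by
        simpa [Metric.mem_closedBall, Complex.dist_eq] using (hbdd _ (hZS n).1).le)
    have hp : Filter.Tendsto (fun k => (h (Z (φ k)), Z (φ k))) Filter.atTop (nhds (c₀, L)) :=
      hcconv.prodMk_nhds (hlim.comp hφ.tendsto_atTop)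
    have hfconv : Filter.Tendsto (fun k => blockDiagMap r h (Z (φ k))) Filter.atTop
        (nhds ((fromBlocks L 0 0 (c₀ • (1 : Matrix (Fin 1) (Fin 1) ℂ))).submatrix
          ⇑finSumFinEquiv.symm ⇑finSumFinEquiv.symm)) :=
      ((continuous_bdm r).tendsto (c₀, L)).comp hp
    have hWK : (fromBlocks L 0 0 (c₀ • (1 : Matrix (Fin 1) (Fin 1) ℂ))).submatrix
        ⇑finSumFinEquiv.symm ⇑finSumFinEquiv.symm ∈ K :=
      hK.isClosed.mem_of_tendsto hfconv (Filter.Eventually.of_forall fun k => (hZS (φ k)).2)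
    obtain ⟨hLΩ, _⟩ := (mem_omega_bdm_iff r c₀ L).mp (hKsub hWK)
    have hhc : Filter.Tendsto (fun k => h (Z (φ k))) Filter.atTop (nhds (h L)) := by
      have hcw : ContinuousWithinAt h (OmegaI r r) L := hhol.continuousOn L hLΩ
      exact hcw.tendsto.comp (tendsto_nhdsWithin_of_tendsto_nhds_of_eventually_within _
        (hlim.comp hφ.tendsto_atTop) (Filter.Eventually.of_forall fun k => (hZS (φ k)).1))
    have hc₀ : c₀ = h L := tendsto_nhds_unique hcconv hhc
    refine ⟨hLΩ, ?_⟩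
    rw [hbd]
    rw [hc₀] at hWK
    exact hWK
  exact (hK.image (continuous_proj r)).of_isClosed_subset hclosed hsub
end
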